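/- arXiv:1003.3971 — 4 statements merged into one kernel-verified Lean document; each statement's English description precedes it below -/
import Mathlib

section
/- Let k be a field of characteristic 0, n ≥ 1, and a₁,…,aₙ ∈ kˣ. Let A be the 2ⁿ × 2ⁿ Gram matrix of the n-fold Pfister form φₙ = ⟨⟨a₁,…,aₙ⟩⟩, i.e. the diagonal matrix whose rows and columns are indexed by vectors ε ∈ {0,1}ⁿ (the first index being ε = (0,…,0)) and whose (ε,ε)-entry is ∏_{i : εᵢ = 1} (−aᵢ). Let K = k(x_ε : ε ∈ {0,1}ⁿ) be the rational function field in 2ⁿ variables and set c = φₙ(x) = Σ_ε A_{εε} x_ε² ∈ K (which is nonzero). Then there exists a matrix C ∈ M_{2ⁿ}(K) such that: (1) C · A · Cᵀ = c · A; (2) C · C = c · I, so that C is invertible with C⁻¹ = C/c; (3) the first row of C is the vector (x_ε)_ε; (4) the first column of C is A · (x_ε)ᵀ. -/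
open MvPolynomial

open Matrix

namespace PfisterAux

def boolCons (n : ℕ) : (Fin n → Bool) ⊕ (Fin n → Bool) ≃ (Fin (n + 1) → Bool) where
  toFun := Sum.elim (fun ε => Fin.cons false ε) (fun ε => Fin.cons true ε)
  invFun ε := if ε 0 then Sum.inr (Fin.tail ε) else Sum.inl (Fin.tail ε)
  left_inv s := by
    cases s with
    | inl ε => simp [Fin.tail_cons]
    | inr ε => simp [Fin.tail_cons]
  right_inv ε := by
    cases h : ε 0 <;> simp only [h, if_true, if_false, Bool.false_eq_true, Sum.elim_inl,
      Sum.elim_inr] <;> (conv_rhs => rw [← Fin.cons_self_tail ε]) <;> rw [h]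

theorem aux {K : Type*} [Field K] (n : ℕ) (a : Fin n → K) (d x : (Fin n → Bool) → K)
    (ha : ∀ i, a i ≠ 0)
    (hd : ∀ ε, d ε = ∏ i, if ε i then a i else 1)
    (hnz : ∀ S : Finset (Fin n → Bool), S.Nonempty → ∑ ε ∈ S, d ε * x ε ^ 2 ≠ 0) :
    ∃ C : Matrix (Fin n → Bool) (Fin n → Bool) K,
      C * C = (∑ ε, d ε * x ε ^ 2) • (1 : Matrix (Fin n → Bool) (Fin n → Bool) K) ∧
      (C * Matrix.diagonal d)ᵀ = C * Matrix.diagonal d ∧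
      ∀ j, C (fun _ => false) j = x j := by
  induction n with
  | zero =>
    haveI : Subsingleton (Fin 0 → Bool) := ⟨fun f g => funext fun i => i.elim0⟩
    set f₀ : Fin 0 → Bool := fun _ => false with hf₀
    have hd0 : d f₀ = 1 := by rw [hd]; simp
    refine ⟨x f₀ • 1, ?_, ?_, ?_⟩
    · rw [Fintype.sum_subsingleton _ f₀, hd0, one_mul, Matrix.smul_mul, Matrix.mul_smul,
        Matrix.one_mul, smul_smul, ← pow_two]
    · rw [Matrix.smul_mul, Matrix.one_mul, Matrix.transpose_smul, Matrix.diagonal_transpose]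
    · intro j
      have : j = f₀ := Subsingleton.elim _ _
      subst this
      simp [Matrix.smul_apply, Matrix.one_apply_eq]
  | succ n ih =>
    set ι := Fin n → Bool with hι
    set a' : Fin n → K := fun i => a i.succ with ha'def
    set d' : ι → K := fun ε => ∏ i, if ε i then a' i else 1 with hd'def
    set xu : ι → K := fun ε => x (Fin.cons false ε) with hxu
    set xv : ι → K := fun ε => x (Fin.cons true ε) with hxv
    have hconsf : ∀ (b : Bool) (ε : ι), d (Fin.cons b ε) = (if b then a 0 else 1) * d' ε := by
      intro b ε
      rw [hd, Fin.prod_univ_succ, hd'def]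
      simp only [Fin.cons_zero, Fin.cons_succ, ha'def]
    have hinj : ∀ b : Bool, Function.Injective (fun ε : ι => (Fin.cons b ε : Fin (n+1) → Bool)) := by
      intro b f g h
      have := congrArg Fin.tail h
      simpa [Fin.tail_cons] using this
    have hnzu : ∀ S : Finset ι, S.Nonempty → ∑ ε ∈ S, d' ε * xu ε ^ 2 ≠ 0 := by
      intro S hS h0
      refine hnz (S.image (fun ε : ι => (Fin.cons false ε : Fin (n+1) → Bool))) (hS.image _) ?_
      rw [Finset.sum_image (fun u _ v _ h => hinj false h), ← h0]
      refine Finset.sum_congr rfl fun ε _ => ?_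
      rw [hconsf, if_neg (by simp), one_mul, hxu]
    have hnzv : ∀ S : Finset ι, S.Nonempty → ∑ ε ∈ S, d' ε * xv ε ^ 2 ≠ 0 := by
      intro S hS h0
      refine hnz (S.image (fun ε : ι => (Fin.cons true ε : Fin (n+1) → Bool))) (hS.image _) ?_
      rw [Finset.sum_image (fun u _ v _ h => hinj true h)]
      have : ∀ ε ∈ S, d (Fin.cons true ε) * x (Fin.cons true ε) ^ 2
          = a 0 * (d' ε * xv ε ^ 2) := by
        intro ε _
        rw [hconsf, if_pos rfl, hxv]
        ring
      rw [Finset.sum_congr rfl this, ← Finset.mul_sum, h0, mul_zero]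
    obtain ⟨P, hP1, hP2, hP3⟩ := ih a' d' xu (fun i => ha i.succ) (fun ε => rfl) hnzu
    obtain ⟨D, hD1, hD2, hD3⟩ := ih a' d' xv (fun i => ha i.succ) (fun ε => rfl) hnzv
    set b : K := ∑ ε : ι, d' ε * xu ε ^ 2 with hbdef
    set e : K := ∑ ε : ι, d' ε * xv ε ^ 2 with hedef
    have he : e ≠ 0 := hnzv Finset.univ Finset.univ_nonempty
    set Sm : Matrix ι ι K := (-e⁻¹) • (D * P * D) with hSm
    -- basic multiplication facts
    have hDS : D * Sm = -(P * D) := by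
      rw [hSm, Matrix.mul_smul, Matrix.mul_assoc D P D, ← Matrix.mul_assoc D D (P * D),
        hD1, Matrix.smul_mul, Matrix.one_mul, smul_smul, neg_mul, inv_mul_cancel₀ he,
        neg_smul, one_smul]
    have hSD : Sm * D = -(D * P) := by
      rw [hSm, Matrix.smul_mul, Matrix.mul_assoc (D * P) D D, hD1, Matrix.mul_smul,
        Matrix.mul_one, smul_smul, neg_mul, inv_mul_cancel₀ he, neg_smul, one_smul]
    have hSS : Sm * Sm = b • 1 := by
      nth_rewrite 1 [hSm]
      rw [Matrix.smul_mul, Matrix.mul_assoc (D * P) D Sm, hDS, Matrix.mul_neg,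
        Matrix.mul_assoc D P (P * D), ← Matrix.mul_assoc P P D, hP1, Matrix.smul_mul,
        Matrix.one_mul, Matrix.mul_smul, hD1, smul_smul, smul_neg, smul_smul]
      rw [show -e⁻¹ * (b * e) = -b by field_simp, neg_smul, neg_neg]
    -- the four blocks of Cb * Cb
    have hblk11 : P * P + D * (a 0 • D) = (b + a 0 * e) • 1 := by
      rw [hP1, Matrix.mul_smul, hD1, smul_smul, add_smul]
    have hblk12 : P * D + D * Sm = 0 := by rw [hDS, add_neg_cancel]
    have hblk21 : (a 0 • D) * P + Sm * (a 0 • D) = 0 := by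
      rw [Matrix.smul_mul, Matrix.mul_smul, hSD, ← smul_add, add_neg_cancel, smul_zero]
    have hblk22 : (a 0 • D) * D + Sm * Sm = (b + a 0 * e) • 1 := by
      rw [Matrix.smul_mul, hD1, hSS, smul_smul, add_smul, add_comm]
    set Cb : Matrix (ι ⊕ ι) (ι ⊕ ι) K := Matrix.fromBlocks P D (a 0 • D) Sm with hCb
    have hCbsq : Cb * Cb = (b + a 0 * e) • (1 : Matrix (ι ⊕ ι) (ι ⊕ ι) K) := by
      rw [hCb, Matrix.fromBlocks_multiply, ← Matrix.fromBlocks_one, Matrix.fromBlocks_smul,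
        hblk11, hblk12, hblk21, hblk22, smul_zero]
    -- symmetry of Cb * diagonal
    have hAP : (Matrix.diagonal d') * Pᵀ = P * Matrix.diagonal d' := by
      conv_rhs => rw [← hP2]
      rw [Matrix.transpose_mul, Matrix.diagonal_transpose]
    have hAD : (Matrix.diagonal d') * Dᵀ = D * Matrix.diagonal d' := by
      conv_rhs => rw [← hD2]
      rw [Matrix.transpose_mul, Matrix.diagonal_transpose]
    have hSA : (Sm * Matrix.diagonal d')ᵀ = Sm * Matrix.diagonal d' := by
      rw [hSm, Matrix.smul_mul, Matrix.transpose_smul]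
      congr 1
      calc (D * P * D * Matrix.diagonal d')ᵀ
          = (Matrix.diagonal d')ᵀ * (D * P * D)ᵀ := Matrix.transpose_mul _ _
        _ = Matrix.diagonal d' * (Dᵀ * (Pᵀ * Dᵀ)) := by
            simp only [Matrix.transpose_mul, Matrix.diagonal_transpose, Matrix.mul_assoc]
        _ = (Matrix.diagonal d' * Dᵀ) * (Pᵀ * Dᵀ) := by rw [Matrix.mul_assoc]
        _ = (D * Matrix.diagonal d') * (Pᵀ * Dᵀ) := by rw [hAD]
        _ = D * ((Matrix.diagonal d' * Pᵀ) * Dᵀ) := by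
            rw [Matrix.mul_assoc, ← Matrix.mul_assoc (Matrix.diagonal d') Pᵀ Dᵀ]
        _ = D * ((P * Matrix.diagonal d') * Dᵀ) := by rw [hAP]
        _ = D * (P * (Matrix.diagonal d' * Dᵀ)) := by rw [Matrix.mul_assoc]
        _ = D * (P * (D * Matrix.diagonal d')) := by rw [hAD]
        _ = D * P * D * Matrix.diagonal d' := by
            simp only [Matrix.mul_assoc]
    have hdiagsmul : (Matrix.diagonal (fun ε : ι => a 0 * d' ε) : Matrix ι ι K)
        = a 0 • Matrix.diagonal d' := by
      rw [← Matrix.diagonal_smul]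
      rfl
    have hCbD : Cb * Matrix.diagonal (Sum.elim d' (fun ε => a 0 * d' ε)) =
        Matrix.fromBlocks (P * Matrix.diagonal d') (a 0 • (D * Matrix.diagonal d'))
          (a 0 • (D * Matrix.diagonal d')) (a 0 • (Sm * Matrix.diagonal d')) := by
      rw [hCb, ← Matrix.fromBlocks_diagonal, Matrix.fromBlocks_multiply, hdiagsmul]
      simp only [Matrix.mul_zero, add_zero, zero_add, Matrix.mul_smul, Matrix.smul_mul]
    have hCbsym : (Cb * Matrix.diagonal (Sum.elim d' (fun ε => a 0 * d' ε)))ᵀ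
        = Cb * Matrix.diagonal (Sum.elim d' (fun ε => a 0 * d' ε)) := by
      rw [hCbD, Matrix.fromBlocks_transpose, Matrix.transpose_smul, Matrix.transpose_smul,
        hP2, hD2, hSA]
    -- rows of Cb
    have hCbrow : ∀ s : ι ⊕ ι, Cb (Sum.inl (fun _ => false)) s
        = x (boolCons n s) := by
      intro s
      cases s with
      | inl ε => rw [hCb, Matrix.fromBlocks_apply₁₁, hP3]; rfl
      | inr ε => rw [hCb, Matrix.fromBlocks_apply₁₂, hD3]; rfl
    -- the sum identity
    have hsum : ∑ ε : Fin (n + 1) → Bool, d ε * x ε ^ 2 = b + a 0 * e := by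
      rw [← Equiv.sum_comp (boolCons n) (fun ε => d ε * x ε ^ 2), Fintype.sum_sum_type]
      congr 1
      · rw [hbdef]
        refine Finset.sum_congr rfl fun ε _ => ?_
        show d (Fin.cons false ε) * x (Fin.cons false ε) ^ 2 = _
        rw [hconsf, if_neg (by simp), one_mul, hxu]
      · rw [hedef, Finset.mul_sum]
        refine Finset.sum_congr rfl fun ε _ => ?_
        show d (Fin.cons true ε) * x (Fin.cons true ε) ^ 2 = _
        rw [hconsf, if_pos rfl, hxv]
        ring
    -- the diagonal transported
    have hdcomp2 : d = (Sum.elim d' (fun ε => a 0 * d' ε)) ∘ (boolCons n).symm := by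
      funext j
      obtain ⟨s, rfl⟩ := (boolCons n).surjective j
      rw [Function.comp_apply, Equiv.symm_apply_apply]
      cases s with
      | inl ε =>
        rw [Sum.elim_inl]
        show d (Fin.cons false ε) = d' ε
        rw [hconsf, if_neg (by simp), one_mul]
      | inr ε =>
        rw [Sum.elim_inr]
        show d (Fin.cons true ε) = a 0 * d' ε
        rw [hconsf, if_pos rfl]
    have hdcomp : Matrix.diagonal d
        = (Matrix.diagonal (Sum.elim d' (fun ε => a 0 * d' ε))).submatrix
            (boolCons n).symm (boolCons n).symm := by
      rw [Matrix.submatrix_diagonal_equiv, ← hdcomp2]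
    have hbase : (boolCons n).symm (fun _ => false) = Sum.inl (fun _ => false) := by
      rw [Equiv.symm_apply_eq]
      funext i
      refine Fin.cases ?_ ?_ i
      · rfl
      · intro j; rfl
    refine ⟨Cb.submatrix (boolCons n).symm (boolCons n).symm, ?_, ?_, ?_⟩
    · rw [Matrix.submatrix_mul_equiv, hCbsq,
        show ((b + a 0 * e) • (1 : Matrix (ι ⊕ ι) (ι ⊕ ι) K)).submatrix
            (boolCons n).symm (boolCons n).symm
          = (b + a 0 * e) •
            ((1 : Matrix (ι ⊕ ι) (ι ⊕ ι) K).submatrix (boolCons n).symm (boolCons n).symm) from rfl,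
        Matrix.submatrix_one_equiv, hsum]
    · rw [hdcomp, Matrix.submatrix_mul_equiv, Matrix.transpose_submatrix, hCbsym]
    · intro j
      obtain ⟨s, rfl⟩ := (boolCons n).surjective j
      rw [Matrix.submatrix_apply, hbase, Equiv.symm_apply_apply, hCbrow]

end PfisterAux


/-- Let `k` be a field of characteristic 0, `n ≥ 1`, and
`a₁,…,aₙ ∈ kˣ`.  Let `A` be the `2ⁿ × 2ⁿ` Gram matrix of the `n`-fold Pfister
form `φₙ = ⟪a₁,…,aₙ⟫` (rows and columns indexed by `ε ∈ {0,1}ⁿ`, the first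
index being `ε = (0,…,0)`, with `(ε,ε)`-entry `∏_{i : εᵢ = 1} (−aᵢ)`).
Let `K = k(x_ε)` be the rational function field in `2ⁿ` variables and
`c = φₙ(x) = Σ_ε A_{εε} x_ε²` (which is nonzero).  Then there is a matrix
`C ∈ M_{2ⁿ}(K)` with `C A Cᵀ = c A`, `C C = c I` (so `C` is invertible with
`C⁻¹ = C/c`), whose first row is `(x_ε)` and whose first column is `A (x_ε)ᵀ`. -/
theorem pfister_similitude_matrix
    (k : Type*) [Field k] [CharZero k] (n : ℕ) (hn : 1 ≤ n)
    (a : Fin n → k) (ha : ∀ i, a i ≠ 0)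
    -- the diagonal entries of the Gram matrix of ⟪a₁,…,aₙ⟫
    (d : (Fin n → Bool) → k) (hd : ∀ ε, d ε = ∏ i : Fin n, if ε i then -a i else 1)
    -- the generic vector x over the rational function field
    -- K = FractionRing (MvPolynomial (Fin n → Bool) k)
    (x : (Fin n → Bool) → FractionRing (MvPolynomial (Fin n → Bool) k))
    (hx : ∀ ε, x ε = algebraMap (MvPolynomial (Fin n → Bool) k)
        (FractionRing (MvPolynomial (Fin n → Bool) k)) (MvPolynomial.X ε))
    -- the Gram matrix over K and the generic value c = φₙ(x)
    (A : Matrix (Fin n → Bool) (Fin n → Bool) (FractionRing (MvPolynomial (Fin n → Bool) k)))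
    (hA : A = Matrix.diagonal (fun ε =>
        algebraMap k (FractionRing (MvPolynomial (Fin n → Bool) k)) (d ε)))
    (c : FractionRing (MvPolynomial (Fin n → Bool) k))
    (hc : c = ∑ ε : Fin n → Bool,
        algebraMap k (FractionRing (MvPolynomial (Fin n → Bool) k)) (d ε) * x ε ^ 2) :
    c ≠ 0 ∧
    ∃ C : Matrix (Fin n → Bool) (Fin n → Bool) (FractionRing (MvPolynomial (Fin n → Bool) k)),
      C * A * C.transpose = c • A ∧
      C * C = c • (1 : Matrix (Fin n → Bool) (Fin n → Bool)
        (FractionRing (MvPolynomial (Fin n → Bool) k))) ∧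
      (∀ ε, C (fun _ => false) ε = x ε) ∧
      (∀ ε, C ε (fun _ => false) = (A.mulVec x) ε) := by
  -- the diagonal entries are nonzero
  have hdne : ∀ ε, d ε ≠ 0 := by
    intro ε
    rw [hd]
    refine Finset.prod_ne_zero_iff.mpr fun i _ => ?_
    split
    · exact neg_ne_zero.mpr (ha i)
    · exact one_ne_zero
  have hinjk : Function.Injective (algebraMap k (FractionRing (MvPolynomial (Fin n → Bool) k))) :=
    (algebraMap k (FractionRing (MvPolynomial (Fin n → Bool) k))).injective
  have hinjP : Function.Injective (algebraMap (MvPolynomial (Fin n → Bool) k) (FractionRing (MvPolynomial (Fin n → Bool) k))) :=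
    IsFractionRing.injective _ _
  -- nonvanishing of all the subcube sums
  have hnz : ∀ S : Finset (Fin n → Bool), S.Nonempty →
      ∑ ε ∈ S, algebraMap k (FractionRing (MvPolynomial (Fin n → Bool) k)) (d ε) * x ε ^ 2 ≠ 0 := by
    rintro S ⟨ε₀, hε₀⟩ h0
    have hrepr : ∑ ε ∈ S, algebraMap k (FractionRing (MvPolynomial (Fin n → Bool) k)) (d ε) * x ε ^ 2
        = algebraMap (MvPolynomial (Fin n → Bool) k) (FractionRing (MvPolynomial (Fin n → Bool) k))
            (∑ ε ∈ S, MvPolynomial.C (d ε) * MvPolynomial.X ε ^ 2) := by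
      rw [map_sum]
      refine Finset.sum_congr rfl fun ε _ => ?_
      rw [hx, _root_.map_mul, _root_.map_pow,
        IsScalarTower.algebraMap_apply k (MvPolynomial (Fin n → Bool) k)
          (FractionRing (MvPolynomial (Fin n → Bool) k)) (d ε),
        MvPolynomial.algebraMap_eq]
    have hp : (∑ ε ∈ S, MvPolynomial.C (d ε) * MvPolynomial.X ε ^ 2 : MvPolynomial (Fin n → Bool) k) ≠ 0 := by
      intro hp0
      have hco := congrArg (MvPolynomial.coeff (Finsupp.single ε₀ 2)) hp0
      rw [MvPolynomial.coeff_sum] at hco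
      have hterm : ∀ ε ∈ S, MvPolynomial.coeff (Finsupp.single ε₀ 2)
          (MvPolynomial.C (d ε) * MvPolynomial.X ε ^ 2) = if ε = ε₀ then d ε else 0 := by
        intro ε _
        rw [MvPolynomial.X_pow_eq_monomial, MvPolynomial.C_mul_monomial, mul_one,
          MvPolynomial.coeff_monomial]
        congr 1
        · simp only [eq_iff_iff]
          constructor
          · intro h
            exact (Finsupp.single_left_inj (by norm_num)).mp h
          · intro h; rw [h]
      rw [Finset.sum_congr rfl hterm, Finset.sum_ite_eq' S ε₀ (fun ε => d ε)] at hco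
      rw [if_pos hε₀, MvPolynomial.coeff_zero] at hco
      exact hdne ε₀ hco
    rw [hrepr] at h0
    exact hp (hinjP (by rw [h0, map_zero]))
  -- apply the auxiliary construction
  have haK : ∀ i : Fin n,
      algebraMap k (FractionRing (MvPolynomial (Fin n → Bool) k)) (-a i) ≠ 0 := by
    intro i h
    exact ha i (neg_eq_zero.mp (hinjk (by rw [_root_.map_zero]; exact h)))
  have hdK : ∀ ε : Fin n → Bool,
      algebraMap k (FractionRing (MvPolynomial (Fin n → Bool) k)) (d ε)
      = ∏ i, if ε i then
          algebraMap k (FractionRing (MvPolynomial (Fin n → Bool) k)) (-a i) else 1 := by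
    intro ε
    rw [hd, map_prod]
    exact Finset.prod_congr rfl fun i _ => by
      rw [apply_ite (algebraMap k (FractionRing (MvPolynomial (Fin n → Bool) k))),
        _root_.map_one]
  obtain ⟨C, hC1, hC2, hC3⟩ := PfisterAux.aux n
      (fun i => algebraMap k (FractionRing (MvPolynomial (Fin n → Bool) k)) (-a i))
      (fun ε => algebraMap k (FractionRing (MvPolynomial (Fin n → Bool) k)) (d ε)) x
      haK hdK hnz
  have hcne : c ≠ 0 := by
    rw [hc]
    exact hnz Finset.univ Finset.univ_nonempty
  -- d at the base point is 1
  have hd0 : d (fun _ => false) = 1 := by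
    rw [hd]
    refine Finset.prod_eq_one fun i _ => ?_
    simp
  -- symmetry rewritten
  have hACt : A * Cᵀ = C * A := by
    rw [hA]
    conv_rhs => rw [← hC2]
    rw [Matrix.transpose_mul, Matrix.diagonal_transpose]
  refine ⟨hcne, C, ?_, ?_, ?_, ?_⟩
  · rw [Matrix.mul_assoc, hACt, ← Matrix.mul_assoc, hC1, ← hc, Matrix.smul_mul,
      Matrix.one_mul]
  · rw [hC1, ← hc]
  · exact hC3
  · intro ε
    have hent := congrFun (congrFun hACt ε) (fun _ => false)
    rw [hA] at hent
    rw [Matrix.diagonal_mul, Matrix.transpose_apply, Matrix.mul_diagonal, hd0,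
      _root_.map_one, mul_one, hC3] at hent
    rw [hA, Matrix.mulVec_diagonal, ← hent]
end

section
/- Let K be a field, m ≥ 2, c ∈ K, and C ∈ M_m(K) a matrix with C · C = c · I. Let M ∈ M_{m−1}(K) be the matrix obtained from C by deleting its first row and first column, let r = (C_{1,2},…,C_{1,m}) be the first row of C with its first entry removed, and let s = (C_{2,1},…,C_{m,1}) be the first column of C with its first entry removed. Then M · M = c · I − s·rᵀ, where s·rᵀ denotes the (m−1) × (m−1) matrix with (i,j)-entry sᵢ rⱼ, and consequently (det M)² = c^{m−2} · (C_{1,1})². -/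
/-- Let `K` be a field, `m ≥ 2` (here `m = n + 1` with `n ≥ 1`),
`c ∈ K`, and `C ∈ M_m(K)` with `C·C = c·I`.  Let `M` be the matrix obtained from
`C` by deleting its first row and first column, `r` the first row of `C` without
its first entry, and `s` the first column of `C` without its first entry.  Then
`M·M = c·I − s·rᵀ` and consequently `(det M)² = c^{m−2} · (C_{1,1})²`. -/
theorem deleted_matrix_square
    (K : Type*) [Field K] (n : ℕ) (hn : 1 ≤ n) (c : K)
    (C : Matrix (Fin (n + 1)) (Fin (n + 1)) K)
    (hC : C * C = c • (1 : Matrix (Fin (n + 1)) (Fin (n + 1)) K))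
    (M : Matrix (Fin n) (Fin n) K) (hM : ∀ i j, M i j = C i.succ j.succ)
    (r : Fin n → K) (hr : ∀ j, r j = C 0 j.succ)
    (s : Fin n → K) (hs : ∀ i, s i = C i.succ 0) :
    M * M = c • (1 : Matrix (Fin n) (Fin n) K) - Matrix.of (fun i j => s i * r j) ∧
    M.det ^ 2 = c ^ (n - 1) * (C 0 0) ^ 2 := by
  -- entrywise consequences of `hC`
  have hCe : ∀ i j, ∑ k, C i k * C k j = c * (1 : Matrix (Fin (n+1)) (Fin (n+1)) K) i j := by
    intro i j
    have := congrFun (congrFun hC i) j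
    simpa [Matrix.mul_apply] using this
  -- Part 1
  have h1 : M * M = c • (1 : Matrix (Fin n) (Fin n) K) - Matrix.of (fun i j => s i * r j) := by
    ext i j
    have hij := hCe i.succ j.succ
    rw [Fin.sum_univ_succ] at hij
    have hone : (1 : Matrix (Fin (n+1)) (Fin (n+1)) K) i.succ j.succ
        = (1 : Matrix (Fin n) (Fin n) K) i j := by
      by_cases h : i = j <;> simp [Matrix.one_apply, h, Fin.succ_inj]
    rw [hone] at hij
    simp only [Matrix.mul_apply, Matrix.sub_apply, Matrix.smul_apply, Matrix.of_apply,
      smul_eq_mul, hM, hr, hs]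
    linear_combination hij
  refine ⟨h1, ?_⟩
  -- the dot product r ⬝ᵥ s
  have hdot : ∑ k : Fin n, r k * s k = c - C 0 0 * C 0 0 := by
    have h00 := hCe 0 0
    rw [Fin.sum_univ_succ] at h00
    simp only [Matrix.one_apply_eq, mul_one] at h00
    simp only [hr, hs]
    linear_combination h00
  have hdet2 : M.det ^ 2 = (c • (1 : Matrix (Fin n) (Fin n) K)
      - Matrix.of (fun i j => s i * r j)).det := by
    rw [← h1, Matrix.det_mul, sq]
  rcases eq_or_ne c 0 with hc | hc
  · -- c = 0
    subst hc
    rcases Nat.lt_or_ge n 2 with h2 | h2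
    · -- n = 1
      interval_cases n
      have : M.det = M 0 0 := by simp [Matrix.det_fin_one]
      rw [this, hM, sq, sq]
      have h00 := hCe 0 0
      rw [Fin.sum_univ_succ, Fin.sum_univ_succ] at h00
      simp only [Matrix.one_apply_eq, mul_one, zero_mul, Finset.univ_eq_empty,
        Finset.sum_empty, add_zero] at h00
      have h10 := hCe (0 : Fin 1).succ (0 : Fin 1).succ
      rw [Fin.sum_univ_succ, Fin.sum_univ_succ] at h10
      simp only [Matrix.one_apply_eq, mul_one, zero_mul, Finset.univ_eq_empty,
        Finset.sum_empty, add_zero] at h10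
      -- C00² + C01 C10 = 0 and C10 C01 + C11² = 0
      linear_combination h10 - h00
    · -- n ≥ 2 : the rank-one matrix has zero determinant
      have hz : (Matrix.of (fun i j => s i * r j) : Matrix (Fin n) (Fin n) K)
          = Matrix.diagonal s * Matrix.of (fun _ j => r j) := by
        ext i j
        simp [Matrix.mul_apply, Matrix.diagonal, Finset.sum_ite_eq, mul_comm]
      have hrank : (Matrix.of (fun _ j : Fin n => r j) : Matrix (Fin n) (Fin n) K).det = 0 := by
        apply Matrix.det_zero_of_row_eq (i := ⟨0, by omega⟩) (j := ⟨1, by omega⟩)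
        · simp [Fin.ext_iff]
        · rfl
      rw [hdet2, zero_smul, zero_sub, Matrix.det_neg, hz, Matrix.det_mul, hrank,
        mul_zero, mul_zero, zero_pow (by omega), zero_mul]
  · -- c ≠ 0
    have hfac : c • (1 : Matrix (Fin n) (Fin n) K) - Matrix.of (fun i j => s i * r j)
        = c • ((1 : Matrix (Fin n) (Fin n) K)
          + Matrix.replicateCol (Fin 1) (-(c⁻¹ • s)) * Matrix.replicateRow (Fin 1) r) := by
      ext i j
      simp [Matrix.mul_apply, Matrix.replicateCol, Matrix.replicateRow, mul_add, sub_eq_add_neg,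
        mul_comm, mul_left_comm, hc]
      field_simp
    rw [hdet2, hfac, Matrix.det_smul]
    erw [Matrix.det_one_add_replicateCol_mul_replicateRow (ι := Fin 1) (-(c⁻¹ • s)) r]
    rw [Fintype.card_fin]
    have : dotProduct r (-(c⁻¹ • s)) = -(c⁻¹ * (c - C 0 0 * C 0 0)) := by
      simp [dotProduct, ← hdot, Finset.mul_sum]
      apply Finset.sum_congr rfl
      intro k _
      ring
    rw [this]
    have hn' : c ^ n = c * c ^ (n - 1) := by
      conv_lhs => rw [show n = 1 + (n - 1) by omega]
      rw [pow_add, pow_one]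
    rw [hn']
    field_simp
    ring
end

section
/- Let k be a field of characteristic 0, m ≥ 2, c₂,…,c_m ∈ kˣ and a ∈ kˣ. Let φ be the diagonal quadratic form ⟨1, c₂,…,c_m⟩ on k^m with Gram matrix A = diag(1, c₂,…,c_m), let φ' = ⟨c₂,…,c_m⟩ be its pure part, and let ψ = φ ⊥ ⟨−a⟩ be the quadratic form on k^{m+1} given by ψ(w, t) = φ(w) − a·t², with polar bilinear form b_ψ(u, v) = ½(ψ(u+v) − ψ(u) − ψ(v)). Let K = k(x₂,…,x_m, y₂,…,y_m) be the rational function field, and set u = (1, x₂,…,x_m, 0) and v = (0, y₂,…,y_m, 1) in K^{m+1}. Suppose C ∈ M_m(K) satisfies C·A·Cᵀ = φ(1, x₂,…,x_m)·A, has first row (1, x₂,…,x_m) and first column A·(1, x₂,…,x_m)ᵀ, and define (z₁,…,z_m) = (0, y₂,…,y_m)·C. Then ψ(u)·ψ(v) − b_ψ(u,v)² = −a·φ(1, x₂,…,x_m) + φ'(z₂,…,z_m). -/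
open MvPolynomial

/-- Let `k` be a field of characteristic 0, `m ≥ 2`
(written `m = m₀ + 2`), `c₂,…,c_m ∈ kˣ`, `a ∈ kˣ`.  Let `φ = ⟨1, c₂,…,c_m⟩`
with Gram matrix `A = diag(1, c₂,…,c_m)`, `φ' = ⟨c₂,…,c_m⟩` its pure part, and
`ψ = φ ⊥ ⟨−a⟩` with polar form `b_ψ`.  Over `K = k(x₂,…,x_m, y₂,…,y_m)` set
`u = (1, x₂,…,x_m, 0)`, `v = (0, y₂,…,y_m, 1)`.  If `C ∈ M_m(K)` satisfies
`C·A·Cᵀ = φ(1,x₂,…,x_m)·A`, has first row `(1, x₂,…,x_m)` and first column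
`A·(1, x₂,…,x_m)ᵀ`, and `(z₁,…,z_m) = (0, y₂,…,y_m)·C`, then
`ψ(u)·ψ(v) − b_ψ(u,v)² = −a·φ(1, x₂,…,x_m) + φ'(z₂,…,z_m)`. -/
theorem residue_discriminant_identity
    (k : Type*) [Field k] [CharZero k] (m₀ : ℕ)
    (d : Fin (m₀ + 2) → k) (hd0 : d 0 = 1) (hd : ∀ i, d i ≠ 0)
    (a : k) (ha : a ≠ 0)
    -- the rational function field K = k(x₂,…,x_m, y₂,…,y_m)
    (K : Type*) [Field K] [Algebra k K]
    (x y : Fin (m₀ + 2) → K) (hx0 : x 0 = 1) (hy0 : y 0 = 0)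
    (e : K ≃ₐ[k] FractionRing (MvPolynomial
        ({i : Fin (m₀ + 2) // i ≠ 0} ⊕ {i : Fin (m₀ + 2) // i ≠ 0}) k))
    (hx : ∀ i (h : i ≠ 0), e (x i) = algebraMap
        (MvPolynomial ({i : Fin (m₀ + 2) // i ≠ 0} ⊕ {i : Fin (m₀ + 2) // i ≠ 0}) k) _
        (MvPolynomial.X (Sum.inl ⟨i, h⟩)))
    (hy : ∀ i (h : i ≠ 0), e (y i) = algebraMap
        (MvPolynomial ({i : Fin (m₀ + 2) // i ≠ 0} ⊕ {i : Fin (m₀ + 2) // i ≠ 0}) k) _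
        (MvPolynomial.X (Sum.inr ⟨i, h⟩)))
    -- the forms φ, ψ and the polar bilinear form of ψ
    (φ : (Fin (m₀ + 2) → K) → K)
    (hφ : ∀ w, φ w = ∑ i : Fin (m₀ + 2), algebraMap k K (d i) * w i ^ 2)
    (ψ : (Fin (m₀ + 2) → K) → K → K)
    (hψ : ∀ w t, ψ w t = φ w - algebraMap k K a * t ^ 2)
    (bψ : K) (hbψ : bψ = (ψ (x + y) 1 - ψ x 0 - ψ y 1) / 2)
    -- the matrix C and the vector z = (0, y₂,…,y_m)·C
    (A : Matrix (Fin (m₀ + 2)) (Fin (m₀ + 2)) K)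
    (hA : A = Matrix.diagonal (fun i => algebraMap k K (d i)))
    (C : Matrix (Fin (m₀ + 2)) (Fin (m₀ + 2)) K)
    (hCACt : C * A * C.transpose = φ x • A)
    (hrow : ∀ j, C 0 j = x j)
    (hcol : ∀ i, C i 0 = (A.mulVec x) i)
    (z : Fin (m₀ + 2) → K) (hz : ∀ j, z j = ∑ i : Fin (m₀ + 2), y i * C i j) :
    ψ x 0 * ψ y 1 - bψ ^ 2 =
      -(algebraMap k K a) * φ x +
        ∑ i ∈ Finset.univ.filter (fun i : Fin (m₀ + 2) => i ≠ 0),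
          algebraMap k K (d i) * z i ^ 2 := by
  have hK : CharZero K := charZero_of_injective_algebraMap (algebraMap k K).injective
  set dK : Fin (m₀ + 2) → K := fun i => algebraMap k K (d i) with hdK
  -- z 0 is the polar form value
  have hz0 : z 0 = ∑ i, dK i * x i * y i := by
    rw [hz]
    refine Finset.sum_congr rfl fun i _ => ?_
    rw [hcol, hA, Matrix.mulVec_diagonal]
    ring
  -- expansion of φ(x+y)
  have key : ∑ i, dK i * (x i + y i) ^ 2 =
      (∑ i, dK i * x i ^ 2) + (∑ i, dK i * y i ^ 2) + 2 * ∑ i, dK i * x i * y i := by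
    rw [Finset.mul_sum, ← Finset.sum_add_distrib, ← Finset.sum_add_distrib]
    exact Finset.sum_congr rfl fun i _ => by ring
  have hb : bψ = z 0 := by
    rw [hbψ, hψ, hψ, hψ, hφ, hφ, hφ, hz0]
    simp only [Pi.add_apply]
    rw [key]
    field_simp
    ring
  -- the key matrix identity, entrywise
  have hent : ∀ i l, ∑ j, C i j * dK j * C l j = φ x * Matrix.diagonal dK i l := by
    intro i l
    have h := congrFun (congrFun hCACt i) l
    rw [hA] at h
    simpa only [Matrix.mul_apply, Matrix.transpose_apply, Matrix.diagonal_apply,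
      mul_ite, mul_zero, ite_mul, zero_mul, Finset.sum_ite_eq, Finset.sum_ite_eq', Finset.mem_univ, if_true,
      Matrix.smul_apply, smul_eq_mul] using h
  have main : ∑ i, dK i * z i ^ 2 = φ x * ∑ i, dK i * y i ^ 2 := by
    calc ∑ j, dK j * z j ^ 2
        = ∑ j, ∑ i, ∑ l, y i * y l * (C i j * dK j * C l j) := by
          refine Finset.sum_congr rfl fun j _ => ?_
          rw [hz, sq, Finset.sum_mul_sum, Finset.mul_sum]
          refine Finset.sum_congr rfl fun i _ => ?_
          rw [Finset.mul_sum]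
          exact Finset.sum_congr rfl fun l _ => by ring
      _ = ∑ i, ∑ l, y i * y l * ∑ j, C i j * dK j * C l j := by
          rw [Finset.sum_comm]
          refine Finset.sum_congr rfl fun i _ => ?_
          rw [Finset.sum_comm]
          exact Finset.sum_congr rfl fun l _ => (Finset.mul_sum _ _ _).symm
      _ = ∑ i, ∑ l, y i * y l * (φ x * Matrix.diagonal dK i l) :=
          Finset.sum_congr rfl fun i _ => Finset.sum_congr rfl fun l _ => by rw [hent]
      _ = φ x * ∑ i, dK i * y i ^ 2 := by
          rw [Finset.mul_sum]
          refine Finset.sum_congr rfl fun i _ => ?_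
          rw [Finset.sum_eq_single i]
          · simp only [Matrix.diagonal_apply_eq]; ring
          · intro l _ hl
            simp [Matrix.diagonal_apply, Ne.symm hl]
          · intro h; exact absurd (Finset.mem_univ i) h
  have hd0K : dK 0 = 1 := by simp [hdK, hd0]
  have hfilter : ∑ i ∈ Finset.univ.filter (fun i : Fin (m₀ + 2) => i ≠ 0),
      dK i * z i ^ 2 = (∑ i, dK i * z i ^ 2) - dK 0 * z 0 ^ 2 := by
    rw [Finset.filter_ne', eq_sub_iff_add_eq, Finset.sum_erase_add _ _ (Finset.mem_univ 0)]
  rw [hψ, hψ, hb, hfilter, main, hd0K, ← hφ y]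
  ring
end

section
/- Let k be a field of characteristic 0, n ≥ 1, a₁,…,aₙ ∈ kˣ, and let φ = ⟨⟨a₁,…,aₙ⟩⟩ be the n-fold Pfister form on k^(2ⁿ); assume φ is anisotropic. Let b ∈ kˣ, fix an index i with 1 ≤ i ≤ n, and let u, v ∈ k be such that N = u² − aᵢ·v² is nonzero (N is a norm from the quadratic extension k(√aᵢ)/k). Then the quadratic forms φ ⊥ ⟨−b⟩ and φ ⊥ ⟨−b·N⟩, given on k^(2ⁿ) × k by (x, z) ↦ φ(x) − b·z² and (x, z) ↦ φ(x) − b·N·z² respectively, are birationally equivalent. -/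
open MvPolynomial

/-- Two polynomials (thought of as hypersurface equations over `k`) are
birationally equivalent if the fraction fields of the corresponding quotient
rings are isomorphic as `k`-algebras. -/
def BirationallyEquivalent (k : Type*) [Field k] {ι ι' : Type*}
    (Ψ : MvPolynomial ι k) (Ψ' : MvPolynomial ι' k) : Prop :=
  Nonempty (FractionRing (MvPolynomial ι k ⧸ Ideal.span {Ψ}) ≃ₐ[k]
    FractionRing (MvPolynomial ι' k ⧸ Ideal.span {Ψ'}))

/-- Combining linear combinations of two polynomials, pushing constants together. -/
lemma comb_aux {R σ : Type*} [CommRing R] (c₁ c₂ c₃ c₄ c₅ c₆ : R)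
    (p q : MvPolynomial σ R) :
    C c₁ * (C c₂ * p + C c₃ * q) + C c₄ * (C c₅ * p + C c₆ * q)
      = C (c₁ * c₂ + c₄ * c₅) * p + C (c₁ * c₃ + c₄ * c₆) * q := by
  simp only [map_add, map_mul]; ring

set_option synthInstance.maxHeartbeats 1000000 in
set_option maxHeartbeats 4000000 in
/-- Let `k` be a field of characteristic 0, `n ≥ 1`,
`a₁,…,aₙ ∈ kˣ`, and let `φ = ⟪a₁,…,aₙ⟫` be the `n`-fold Pfister form on
`k^(2ⁿ)`; assume `φ` is anisotropic.  Let `b ∈ kˣ`, fix an index `i`, and let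
`u, v ∈ k` with `N = u² − aᵢ·v² ≠ 0` (a norm from `k(√aᵢ)/k`).  Then the forms
`φ ⊥ ⟨−b⟩ : (x,z) ↦ φ(x) − b·z²` and `φ ⊥ ⟨−b·N⟩ : (x,z) ↦ φ(x) − b·N·z²`
are birationally equivalent. -/
theorem pfister_norm_scaling_birational
    (k : Type*) [Field k] [CharZero k] (n : ℕ) (hn : 1 ≤ n)
    (a : Fin n → k) (ha : ∀ i, a i ≠ 0)
    (d : (Fin n → Bool) → k) (hd : ∀ ε, d ε = ∏ i : Fin n, if ε i then -a i else 1)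
    (haniso : ∀ x : (Fin n → Bool) → k, ∑ ε : Fin n → Bool, d ε * x ε ^ 2 = 0 → x = 0)
    (b : k) (hb : b ≠ 0)
    (i : Fin n) (u v : k) (N : k) (hN : N = u ^ 2 - a i * v ^ 2) (hN0 : N ≠ 0)
    (Ψ₁ Ψ₂ : MvPolynomial ((Fin n → Bool) ⊕ Unit) k)
    (hΨ₁ : Ψ₁ = (∑ ε : Fin n → Bool, MvPolynomial.C (d ε) * X (Sum.inl ε) ^ 2)
        - MvPolynomial.C b * X (Sum.inr ()) ^ 2)
    (hΨ₂ : Ψ₂ = (∑ ε : Fin n → Bool, MvPolynomial.C (d ε) * X (Sum.inl ε) ^ 2)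
        - MvPolynomial.C (b * N) * X (Sum.inr ()) ^ 2) :
    BirationallyEquivalent k Ψ₁ Ψ₂ := by
  classical
  -- the substitution and its inverse
  set sf : ((Fin n → Bool) ⊕ Unit) → MvPolynomial ((Fin n → Bool) ⊕ Unit) k := fun s =>
    match s with
    | Sum.inl ε =>
        if ε i then C v * X (Sum.inl (Function.update ε i false)) + C u * X (Sum.inl ε)
        else C u * X (Sum.inl ε) + C (a i * v) * X (Sum.inl (Function.update ε i true))
    | Sum.inr _ => X (Sum.inr ()) with hsf
  set tf : ((Fin n → Bool) ⊕ Unit) → MvPolynomial ((Fin n → Bool) ⊕ Unit) k := fun s =>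
    match s with
    | Sum.inl ε =>
        if ε i then C (-v / N) * X (Sum.inl (Function.update ε i false))
            + C (u / N) * X (Sum.inl ε)
        else C (u / N) * X (Sum.inl ε)
            + C (-(a i * v) / N) * X (Sum.inl (Function.update ε i true))
    | Sum.inr _ => X (Sum.inr ()) with htf
  -- basic update facts
  have upd_false_of_false : ∀ ε : Fin n → Bool, ε i = false → Function.update ε i false = ε := by
    intro ε hε; conv_rhs => rw [← Function.update_eq_self i ε]
    rw [hε]
  have upd_true_of_true : ∀ ε : Fin n → Bool, ε i = true → Function.update ε i true = ε := by
    intro ε hε; conv_rhs => rw [← Function.update_eq_self i ε]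
    rw [hε]
  have upd_same : ∀ (ε : Fin n → Bool) (c : Bool), Function.update ε i c i = c := by
    intro ε c; simp
  -- d under updating coordinate i
  have hd_update : ∀ (ε : Fin n → Bool) (c : Bool),
      d (Function.update ε i c) = (if c then -a i else 1) *
        ∏ j ∈ Finset.univ.erase i, (if ε j then -a j else 1) := by
    intro ε c
    rw [hd, ← Finset.mul_prod_erase _ _ (Finset.mem_univ i)]
    rw [upd_same]
    congr 1
    refine Finset.prod_congr rfl fun j hj => ?_
    rw [Function.update_of_ne (Finset.ne_of_mem_erase hj)]
  -- the two quadratic families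
  set F : (Fin n → Bool) → MvPolynomial ((Fin n → Bool) ⊕ Unit) k := fun ε => C (d ε) * (sf (Sum.inl ε)) ^ 2 with hF
  set G : (Fin n → Bool) → MvPolynomial ((Fin n → Bool) ⊕ Unit) k := fun ε => C (d ε) * (X (Sum.inl ε)) ^ 2 with hG
  set flipI : (Fin n → Bool) → (Fin n → Bool) := fun ε => Function.update ε i (!ε i) with hflipI
  have hflip_inv : Function.Involutive flipI := by
    intro ε
    simp only [hflipI, upd_same, Function.update_idem, Bool.not_not, Function.update_eq_self]
  -- the key pointwise identity for a pair
  have pair : ∀ ε : Fin n → Bool, ε i = false →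
      F ε + F (Function.update ε i true) =
        C N * (G ε + G (Function.update ε i true)) := by
    intro ε hε
    have h1 : sf (Sum.inl ε) = C u * X (Sum.inl ε)
        + C (a i * v) * X (Sum.inl (Function.update ε i true)) := by
      simp only [hsf, hε]; rfl
    have h2 : sf (Sum.inl (Function.update ε i true)) = C v * X (Sum.inl ε)
        + C u * X (Sum.inl (Function.update ε i true)) := by
      simp only [hsf, upd_same, Function.update_idem, upd_false_of_false ε hε]; rfl
    have hd1 : d (Function.update ε i true) = -a i * d ε := by
      rw [hd_update ε true, if_pos rfl]
      congr 1
      have := hd_update ε false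
      rw [upd_false_of_false ε hε] at this
      rw [this, if_neg (by simp), one_mul]
    simp only [hF, hG]
    rw [h1, h2, hd1, hN]
    simp only [map_mul, map_add, map_sub, map_neg, map_pow]
    ring
  have key : ∀ ε : Fin n → Bool, F ε + F (flipI ε) = C N * (G ε + G (flipI ε)) := by
    intro ε
    cases hε : ε i with
    | false =>
        have : flipI ε = Function.update ε i true := by rw [hflipI]; simp [hε]
        rw [this]; exact pair ε hε
    | true =>
        have hflip : flipI ε = Function.update ε i false := by rw [hflipI]; simp [hε]
        have h0 : (Function.update ε i false) i = false := upd_same ε false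
        have := pair (Function.update ε i false) h0
        rw [Function.update_idem, upd_true_of_true ε hε] at this
        rw [hflip]
        linear_combination this
  -- sum identity
  have hFsum : ∑ ε : Fin n → Bool, F (flipI ε) = ∑ ε : Fin n → Bool, F ε :=
    Fintype.sum_bijective flipI hflip_inv.bijective _ _ (fun ε => rfl)
  have hGsum : ∑ ε : Fin n → Bool, G (flipI ε) = ∑ ε : Fin n → Bool, G ε :=
    Fintype.sum_bijective flipI hflip_inv.bijective _ _ (fun ε => rfl)
  have hsum : ∑ ε : Fin n → Bool, F ε = C N * ∑ ε : Fin n → Bool, G ε := by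
    have h2 : ∑ ε : Fin n → Bool, (F ε + F (flipI ε))
        = ∑ ε : Fin n → Bool, C N * (G ε + G (flipI ε)) :=
      Finset.sum_congr rfl fun ε _ => key ε
    rw [Finset.sum_add_distrib, hFsum, ← Finset.mul_sum, Finset.sum_add_distrib, hGsum] at h2
    have h3 : (2 : MvPolynomial ((Fin n → Bool) ⊕ Unit) k) * (∑ ε : Fin n → Bool, F ε)
        = 2 * (C N * ∑ ε : Fin n → Bool, G ε) := by ring_nf; ring_nf at h2; linear_combination h2
    exact mul_left_cancel₀ two_ne_zero h3
  -- helpers to evaluate sf and tf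
  have sf_false : ∀ ε : Fin n → Bool, ε i = false → sf (Sum.inl ε)
      = C u * X (Sum.inl ε) + C (a i * v) * X (Sum.inl (Function.update ε i true)) := by
    intro ε hε; simp only [hsf, hε]; rfl
  have sf_true : ∀ ε : Fin n → Bool, ε i = true → sf (Sum.inl ε)
      = C v * X (Sum.inl (Function.update ε i false)) + C u * X (Sum.inl ε) := by
    intro ε hε; simp only [hsf, hε]; rfl
  have tf_false : ∀ ε : Fin n → Bool, ε i = false → tf (Sum.inl ε)
      = C (u / N) * X (Sum.inl ε) + C (-(a i * v) / N) * X (Sum.inl (Function.update ε i true)) := by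
    intro ε hε; simp only [htf, hε]; rfl
  have tf_true : ∀ ε : Fin n → Bool, ε i = true → tf (Sum.inl ε)
      = C (-v / N) * X (Sum.inl (Function.update ε i false)) + C (u / N) * X (Sum.inl ε) := by
    intro ε hε; simp only [htf, hε]; rfl
  have cone : (u ^ 2 - a i * v ^ 2) / N = 1 := by rw [← hN]; field_simp
  -- aeval sf sends Ψ₂ to C N * Ψ₁
  have hσΨ₂ : aeval sf Ψ₂ = C N * Ψ₁ := by
    rw [hΨ₂, hΨ₁, map_sub, map_sum]
    simp only [map_mul, map_pow, aeval_X, aeval_C, MvPolynomial.algebraMap_eq]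
    rw [show (sf (Sum.inr ()) : MvPolynomial ((Fin n → Bool) ⊕ Unit) k) = X (Sum.inr ()) from rfl]
    rw [show (∑ ε : Fin n → Bool, C (d ε) * sf (Sum.inl ε) ^ 2 : MvPolynomial ((Fin n → Bool) ⊕ Unit) k)
        = ∑ ε : Fin n → Bool, F ε from rfl, hsum]
    rw [show (∑ ε : Fin n → Bool, C (d ε) * X (Sum.inl ε) ^ 2 : MvPolynomial ((Fin n → Bool) ⊕ Unit) k)
        = ∑ ε : Fin n → Bool, G ε from rfl]
    ring
  -- the two substitutions are mutually inverse
  have hst : (aeval sf).comp (aeval tf) = AlgHom.id k (MvPolynomial ((Fin n → Bool) ⊕ Unit) k) := by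
    apply MvPolynomial.algHom_ext
    rintro (ε | un)
    · simp only [AlgHom.coe_comp, Function.comp_apply, aeval_X, AlgHom.id_apply]
      cases hε : ε i with
      | true =>
          rw [tf_true ε hε]
          simp only [map_add, map_mul, aeval_C, aeval_X, MvPolynomial.algebraMap_eq]
          try simp only [← C_mul]
          rw [sf_false _ (upd_same ε false), sf_true ε hε,
            Function.update_idem, upd_true_of_true ε hε, comb_aux,
            show (-v / N * u + u / N * v) = 0 from by ring,
            show (-v / N * (a i * v) + u / N * u) = 1 from by rw [← cone]; ring]
          try simp
      | false =>
          rw [tf_false ε hε]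
          simp only [map_add, map_mul, aeval_C, aeval_X, MvPolynomial.algebraMap_eq]
          try simp only [← C_mul]
          rw [sf_false ε hε, sf_true _ (upd_same ε true),
            Function.update_idem, upd_false_of_false ε hε]
          rw [show (C (u / N) * (C u * X (Sum.inl ε)
                + C (a i * v) * X (Sum.inl (Function.update ε i true)))
              + C (-(a i * v) / N) * (C v * X (Sum.inl ε)
                + C u * X (Sum.inl (Function.update ε i true))) : MvPolynomial ((Fin n → Bool) ⊕ Unit) k)
            = C (u / N * u + -(a i * v) / N * v) * X (Sum.inl ε)
              + C (u / N * (a i * v) + -(a i * v) / N * u)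
                * X (Sum.inl (Function.update ε i true)) from comb_aux ..,
            show (u / N * u + -(a i * v) / N * v) = 1 from by rw [← cone]; ring,
            show (u / N * (a i * v) + -(a i * v) / N * u) = 0 from by ring]
          try simp
    · simp only [AlgHom.coe_comp, Function.comp_apply, aeval_X, AlgHom.id_apply]
      rw [show (tf (Sum.inr un) : MvPolynomial ((Fin n → Bool) ⊕ Unit) k) = X (Sum.inr ()) from rfl, aeval_X,
        show (sf (Sum.inr ()) : MvPolynomial ((Fin n → Bool) ⊕ Unit) k) = X (Sum.inr ()) from rfl]
  have hts : (aeval tf).comp (aeval sf) = AlgHom.id k (MvPolynomial ((Fin n → Bool) ⊕ Unit) k) := by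
    apply MvPolynomial.algHom_ext
    rintro (ε | un)
    · simp only [AlgHom.coe_comp, Function.comp_apply, aeval_X, AlgHom.id_apply]
      cases hε : ε i with
      | true =>
          rw [sf_true ε hε]
          simp only [map_add, map_mul, aeval_C, aeval_X, MvPolynomial.algebraMap_eq]
          try simp only [← C_mul]
          rw [tf_false _ (upd_same ε false), tf_true ε hε,
            Function.update_idem, upd_true_of_true ε hε, comb_aux,
            show (v * (u / N) + u * (-v / N)) = 0 from by ring,
            show (v * (-(a i * v) / N) + u * (u / N)) = 1 from by rw [← cone]; ring]
          try simp
      | false =>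
          rw [sf_false ε hε]
          simp only [map_add, map_mul, aeval_C, aeval_X, MvPolynomial.algebraMap_eq]
          try simp only [← C_mul]
          rw [tf_false ε hε, tf_true _ (upd_same ε true),
            Function.update_idem, upd_false_of_false ε hε, comb_aux,
            show (u * (u / N) + a i * v * (-v / N)) = 1 from by rw [← cone]; ring,
            show (u * (-(a i * v) / N) + a i * v * (u / N)) = 0 from by ring]
          try simp
    · simp only [AlgHom.coe_comp, Function.comp_apply, aeval_X, AlgHom.id_apply]
      rw [show (sf (Sum.inr un) : MvPolynomial ((Fin n → Bool) ⊕ Unit) k) = X (Sum.inr ()) from rfl, aeval_X,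
        show (tf (Sum.inr ()) : MvPolynomial ((Fin n → Bool) ⊕ Unit) k) = X (Sum.inr ()) from rfl]
  -- assemble the algebra equivalence and pass to fraction fields
  let σe : MvPolynomial ((Fin n → Bool) ⊕ Unit) k ≃ₐ[k] MvPolynomial ((Fin n → Bool) ⊕ Unit) k := AlgEquiv.ofAlgHom (aeval sf) (aeval tf) hst hts
  have hmap : Ideal.map (σe : MvPolynomial ((Fin n → Bool) ⊕ Unit) k →+* MvPolynomial ((Fin n → Bool) ⊕ Unit) k) (Ideal.span {Ψ₂}) = Ideal.span {Ψ₁} := by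
    rw [Ideal.map_span, Set.image_singleton]
    rw [show (σe : MvPolynomial ((Fin n → Bool) ⊕ Unit) k →+* MvPolynomial ((Fin n → Bool) ⊕ Unit) k) Ψ₂ = C N * Ψ₁ from hσΨ₂]
    exact Ideal.span_singleton_mul_left_unit (hN0.isUnit.map C) _
  let e2 : (MvPolynomial ((Fin n → Bool) ⊕ Unit) k ⧸ Ideal.span {Ψ₂}) ≃ₐ[k] (MvPolynomial ((Fin n → Bool) ⊕ Unit) k ⧸ Ideal.span {Ψ₁}) :=
    Ideal.quotientEquivAlg _ _ σe hmap.symm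
  exact ⟨IsFractionRing.algEquivOfAlgEquiv (R := k)
    (K := FractionRing (MvPolynomial ((Fin n → Bool) ⊕ Unit) k ⧸ Ideal.span {Ψ₁}))
    (L := FractionRing (MvPolynomial ((Fin n → Bool) ⊕ Unit) k ⧸ Ideal.span {Ψ₂})) e2.symm⟩
end
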